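/- Let p ≥ q* and q ≥ 2 with q* = q/(q−1), and define g(t) := (p−q)t^{2p} + (p²/((p−1)q))t^{2p−2} + (2q − p − pq)t^p + (p−1)q − p²/((p−1)q) for t ∈ [0,1]. Then g(t) ≥ 0 for all t ∈ [0,1], with g(1) = 0. -/

import Mathlib

open Real

set_option maxHeartbeats 2000000 in
theorem g_nonneg (p q : ℝ) (hq : 2 ≤ q) (hp : q / (q - 1) ≤ p) :
    (∀ t ∈ Set.Icc (0:ℝ) 1,
        0 ≤ (p - q) * t ^ (2 * p) + p ^ 2 / ((p - 1) * q) * t ^ (2 * p - 2)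
            + (2 * q - p - p * q) * t ^ p + (p - 1) * q - p ^ 2 / ((p - 1) * q)) ∧
      (p - q) * (1:ℝ) ^ (2 * p) + p ^ 2 / ((p - 1) * q) * (1:ℝ) ^ (2 * p - 2)
          + (2 * q - p - p * q) * (1:ℝ) ^ p + (p - 1) * q - p ^ 2 / ((p - 1) * q) = 0 := by
  have hq1 : (0:ℝ) < q - 1 := by linarith
  have hq0 : (0:ℝ) < q := by linarith
  have hpq : q ≤ p * (q - 1) := (div_le_iff₀ hq1).mp hp
  have hp1 : 1 < p := by nlinarith
  have hp0 : 0 < p := by linarith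
  have hpA : p ≤ (p - 1) * q := by nlinarith
  have hDen : 0 < (p - 1) * q := by nlinarith
  have hC : 0 ≤ (p - 1) * q - p ^ 2 / ((p - 1) * q) := by
    rw [sub_nonneg, div_le_iff₀ hDen]
    nlinarith
  constructor
  · intro t ht
    obtain ⟨ht0, ht1⟩ := ht
    rcases eq_or_lt_of_le ht0 with h0 | h0
    · rw [← h0]
      rw [Real.zero_rpow (by positivity), Real.zero_rpow (by nlinarith), Real.zero_rpow (by positivity)]
      linarith [hC]
    · -- 0 < t
      have hT1 : (0:ℝ) ≤ t ^ p := Real.rpow_nonneg ht0 _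
      have hT2 : (0:ℝ) ≤ t ^ (2*p - 2) := Real.rpow_nonneg ht0 _
      have hT3 : (0:ℝ) ≤ t ^ (2*p) := Real.rpow_nonneg ht0 _
      rcases le_or_gt p 2 with hp2 | hp2
      · -- algebraic decomposition for p ≤ 2
        have hA2 : t ^ (2*p) ≤ t ^ p :=
          Real.rpow_le_rpow_of_exponent_ge h0 ht1 (by linarith)
        have hA3 : t ^ (2*p - 2) ≤ 1 := Real.rpow_le_one ht0 ht1 (by linarith)
        have hgm := Real.geom_mean_le_arith_mean2_weighted
          (w₁ := p/2) (w₂ := (2-p)/2) (p₁ := t ^ (2*p-2)) (p₂ := t ^ (2*p))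
          (by linarith) (by linarith) hT2 hT3 (by ring)
        have hEq : (t ^ (2*p-2)) ^ (p/2) * (t ^ (2*p)) ^ ((2-p)/2) = t ^ p := by
          rw [← Real.rpow_mul ht0, ← Real.rpow_mul ht0, ← Real.rpow_add h0]
          congr 1
          ring
        have hA1 : 2 * t ^ p ≤ p * t ^ (2*p-2) + (2 - p) * t ^ (2*p) := by
          rw [← hEq]; linarith [hgm]
        have hm2 : (0:ℝ) ≤ 4*p*q - p^2 - p^2*q - 2*q := by
          nlinarith [mul_nonneg (by linarith : (0:ℝ) ≤ 2 - p)
              (by linarith : (0:ℝ) ≤ p*(q-1) - q),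
            mul_nonneg hp0.le (by linarith : (0:ℝ) ≤ q + 2 - 2*p)]
        have key : 0 ≤ (p*(p-1)*q) * ((p - q) * t ^ (2 * p) + p ^ 2 / ((p - 1) * q) * t ^ (2 * p - 2)
            + (2 * q - p - p * q) * t ^ p + (p - 1) * q - p ^ 2 / ((p - 1) * q)) := by
          have hgexp : (p*(p-1)*q) * ((p - q) * t ^ (2 * p) + p ^ 2 / ((p - 1) * q) * t ^ (2 * p - 2)
              + (2 * q - p - p * q) * t ^ p + (p - 1) * q - p ^ 2 / ((p - 1) * q))
              = ((p-1)^2*q^2) * (p * t ^ (2*p-2) + (2 - p) * t ^ (2*p) - 2 * t ^ p)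
                + (q*(p-1)*(4*p*q - p^2 - p^2*q - 2*q)) * (t ^ p - t ^ (2*p))
                + (p*((p-1)^2*q^2 - p^2)) * (1 - t ^ (2*p-2)) := by
            have : p - 1 ≠ 0 := by linarith
            field_simp
            ring
          rw [hgexp]
          have h1 : 0 ≤ ((p-1)^2*q^2) * (p * t ^ (2*p-2) + (2 - p) * t ^ (2*p) - 2 * t ^ p) :=
            mul_nonneg (by positivity) (by linarith)
          have h2 : 0 ≤ (q*(p-1)*(4*p*q - p^2 - p^2*q - 2*q)) * (t ^ p - t ^ (2*p)) :=
            mul_nonneg (mul_nonneg (mul_nonneg hq0.le (by linarith)) hm2) (by linarith)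
          have h3 : 0 ≤ (p*((p-1)^2*q^2 - p^2)) * (1 - t ^ (2*p-2)) :=
            mul_nonneg (mul_nonneg hp0.le (by nlinarith)) (by linarith)
          linarith
        have hK : 0 < p*(p-1)*q := by nlinarith
        nlinarith [key, hK]
      · -- calculus for p > 2
        set f : ℝ → ℝ := fun x => (p - q) * x ^ (2 * p) + p ^ 2 / ((p - 1) * q) * x ^ (2 * p - 2)
            + (2 * q - p - p * q) * x ^ p + (p - 1) * q - p ^ 2 / ((p - 1) * q) with hf
        have hderiv : ∀ x : ℝ, 0 < x → HasDerivAt f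
            ((p - q) * (2 * p * x ^ (2 * p - 1)) + p ^ 2 / ((p - 1) * q) * ((2 * p - 2) * x ^ (2 * p - 2 - 1))
              + (2 * q - p - p * q) * (p * x ^ (p - 1))) x := by
          intro x hx0
          have d1 : HasDerivAt (fun y : ℝ => y ^ (2 * p)) (2 * p * x ^ (2 * p - 1)) x :=
            Real.hasDerivAt_rpow_const (Or.inl hx0.ne')
          have d2 : HasDerivAt (fun y : ℝ => y ^ (2 * p - 2)) ((2 * p - 2) * x ^ (2 * p - 2 - 1)) x :=
            Real.hasDerivAt_rpow_const (Or.inl hx0.ne')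
          have d3 : HasDerivAt (fun y : ℝ => y ^ p) (p * x ^ (p - 1)) x :=
            Real.hasDerivAt_rpow_const (Or.inl hx0.ne')
          exact ((((d1.const_mul _).add (d2.const_mul _)).add (d3.const_mul _)).add_const
            _).sub_const _
        have hanti : AntitoneOn f (Set.Icc t 1) := by
          apply antitoneOn_of_deriv_nonpos (convex_Icc t 1)
          · intro x hx
            have hx0 : 0 < x := lt_of_lt_of_le h0 hx.1
            exact (hderiv x hx0).continuousAt.continuousWithinAt
          · intro x hx
            rw [interior_Icc] at hx
            have hx0 : 0 < x := lt_trans h0 hx.1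
            exact (hderiv x hx0).differentiableAt.differentiableWithinAt
          · intro x hx
            rw [interior_Icc] at hx
            have hx0 : 0 < x := lt_trans h0 hx.1
            have hx1 : x ≤ 1 := le_of_lt hx.2
            rw [(hderiv x hx0).deriv]
            have e1 : x ^ (2*p - 1) = x ^ p * x ^ (p - 1) := by
              rw [← Real.rpow_add hx0]; congr 1; ring
            have e2 : x ^ (2*p - 2 - 1) = x ^ (p - 2) * x ^ (p - 1) := by
              rw [← Real.rpow_add hx0]; congr 1; ring
            have hY : (0:ℝ) ≤ x ^ (p - 1) := Real.rpow_nonneg hx0.le _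
            have hX1 : (0:ℝ) ≤ x ^ p := Real.rpow_nonneg hx0.le _
            have hX12 : x ^ p ≤ x ^ (p - 2) :=
              Real.rpow_le_rpow_of_exponent_ge hx0 hx1 (by linarith)
            have hX2 : x ^ (p - 2) ≤ 1 := Real.rpow_le_one hx0.le hx1 (by linarith)
            have hAq : q * (2*p - 2) * (p ^ 2 / ((p - 1) * q)) = 2 * p ^ 2 := by
              have : p - 1 ≠ 0 := by linarith
              field_simp
            have hX2nn : (0:ℝ) ≤ x ^ (p - 2) := hX1.trans hX12
            have hk : 2*p*q*(p - q) * x ^ p + 2*p^2 * x ^ (p - 2) + p*q*(2*q - p - p*q) ≤ 0 := by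
              rcases le_total p q with hpq2 | hpq2
              · have h1 : 0 ≤ q * (p * (q - p) * x ^ p) :=
                  mul_nonneg hq0.le (mul_nonneg (mul_nonneg hp0.le (by linarith)) hX1)
                have h2 : 0 ≤ p^2 * (1 - x ^ (p - 2)) :=
                  mul_nonneg (by positivity) (by linarith)
                have h3 : 0 ≤ p^2 * (q - 2) := mul_nonneg (by positivity) (by linarith)
                have h4 : 0 ≤ p * q^2 * (p - 2) :=
                  mul_nonneg (mul_nonneg hp0.le (by positivity)) (by linarith)
                nlinarith [h1, h2, h3, h4]
              · have h1 : 0 ≤ q * (p * (p - q) * (x ^ (p - 2) - x ^ p)) :=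
                  mul_nonneg hq0.le (mul_nonneg (mul_nonneg hp0.le (by linarith)) (by linarith))
                have h2 : 0 ≤ (1 - x ^ (p - 2)) * (p * q * (p + p * q - 2 * q)) := by
                  apply mul_nonneg (by linarith)
                  apply mul_nonneg (mul_nonneg hp0.le hq0.le)
                  nlinarith
                have h3 : 0 ≤ x ^ (p - 2) * (p^2 * (q - 2) * (q + 1)) := by
                  apply mul_nonneg hX2nn
                  apply mul_nonneg (mul_nonneg (by positivity) (by linarith))
                  linarith
                nlinarith [h1, h2, h3]
            have hfact : (p - q) * (2 * p * x ^ (2 * p - 1)) + p ^ 2 / ((p - 1) * q) * ((2 * p - 2) * x ^ (2 * p - 2 - 1))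
                + (2 * q - p - p * q) * (p * x ^ (p - 1))
                = x ^ (p - 1) / q * (2*p*q*(p - q) * x ^ p + q * (2*p - 2) * (p ^ 2 / ((p - 1) * q)) * x ^ (p - 2) + p*q*(2*q - p - p*q)) := by
              rw [e1, e2]
              field_simp
            rw [hfact, hAq]
            apply mul_nonpos_of_nonneg_of_nonpos
            · positivity
            · exact hk
        have h1mem : (1:ℝ) ∈ Set.Icc t 1 := Set.mem_Icc.mpr ⟨ht1, le_rfl⟩
        have htmem : t ∈ Set.Icc t 1 := Set.mem_Icc.mpr ⟨le_rfl, ht1⟩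
        have hf1 : f 1 = 0 := by
          simp only [hf, Real.one_rpow]
          ring
        have := hanti htmem h1mem ht1
        rw [hf1] at this
        exact this
  · simp only [Real.one_rpow]
    ring
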